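/- arXiv:2011.10209 — 4 statements merged into one kernel-verified Lean document; each statement's English description precedes it below -/
import Mathlib

section
/- In the category Rel of sets and relations, the exponential functor ! mapping a set E to the set of finite multisets Mfin(E), and a relation s ⊆ E × F to !s = {([a₁,…,aₙ],[b₁,…,bₙ]) | n ∈ ℕ, ∀i (aᵢ,bᵢ) ∈ s}, is strict locally continuous: it is monotone on hom-sets, commutes with directed unions of relations, and maps set inclusions to set inclusions. -/
universe u

/-- The diagonal (identity/inclusion) relation on a set `E`. -/
def diagRel {U : Type u} (E : Set U) : Set (U × U) :=
  {p | p.1 = p.2 ∧ p.1 ∈ E}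

/-- The action of the exponential `!` of `Rel` on a relation `t ⊆ E × F`:
`!t` relates two finite multisets `[a₁,…,aₙ]` and `[b₁,…,bₙ]` when
`(aᵢ,bᵢ) ∈ t` for all `i`. -/
def bangRel {α β : Type u} (t : Set (α × β)) : Set (Multiset α × Multiset β) :=
  {p | Multiset.Rel (fun a b => (a, b) ∈ t) p.1 p.2}

lemma bangRel_mono {α β : Type u} {s t : Set (α × β)} (h : s ⊆ t) :
    bangRel s ⊆ bangRel t := fun _ hp => hp.mono (fun a _ b _ hab => h hab)

/-- The exponential functor `!` of `Rel` (finite multisets) is strict locally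
continuous: monotone on hom-sets, commutes with directed unions of relations,
and maps set inclusions (diagonal relations) to set inclusions. -/
theorem bang_strict_locally_continuous :
    (∀ (α β : Type u) (s t : Set (α × β)), s ⊆ t → bangRel s ⊆ bangRel t) ∧
    (∀ (α β : Type u) (D : Set (Set (α × β))), D.Nonempty → DirectedOn (· ⊆ ·) D →
      bangRel (⋃₀ D) = ⋃ s ∈ D, bangRel s) ∧
    (∀ (α : Type u) (E : Set α),
      bangRel (diagRel E) = diagRel {m : Multiset α | ∀ a ∈ m, a ∈ E}) := by
  refine ⟨fun α β s t h => bangRel_mono h, ?_, ?_⟩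
  · intro α β D hne hdir
    apply Set.Subset.antisymm
    · rintro ⟨m₁, m₂⟩ hp
      simp only [bangRel, Set.mem_setOf_eq] at hp
      induction hp with
      | zero =>
        obtain ⟨s, hs⟩ := hne
        exact Set.mem_biUnion hs Multiset.Rel.zero
      | @cons a b as bs hab _ ih =>
        obtain ⟨s₁, hs₁, hab₁⟩ := hab
        obtain ⟨s₂, hs₂, hrel₂⟩ := by simpa using ih
        obtain ⟨s₃, hs₃, h₁₃, h₂₃⟩ := hdir s₁ hs₁ s₂ hs₂
        exact Set.mem_biUnion hs₃ (Multiset.Rel.cons (h₁₃ hab₁) (bangRel_mono h₂₃ hrel₂))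
    · refine Set.iUnion₂_subset fun s hs => bangRel_mono fun p hp => ⟨s, hs, hp⟩
  · intro α E
    ext ⟨m₁, m₂⟩
    simp only [bangRel, diagRel, Set.mem_setOf_eq]
    constructor
    · intro h
      induction h with
      | zero => exact ⟨rfl, by simp⟩
      | @cons a b as bs hab _ ih =>
        obtain ⟨rfl, haE⟩ := hab
        obtain ⟨heq, hE⟩ := ih
        refine ⟨by rw [heq], ?_⟩
        intro x hx
        rcases Multiset.mem_cons.mp hx with rfl | hx
        · exact haE
        · exact hE x hx
    · rintro ⟨rfl, hE⟩
      exact Multiset.rel_refl_of_refl_on fun a ha => ⟨rfl, hE a ha⟩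
end

section
/- Let X and Y be non-uniform totality spaces and t ⊆ |X| × |Y|. Then t ∈ 𝒯(X ⊸ Y) if and only if for every u ∈ 𝒯(X), the image t·u = {b | ∃a ∈ u, (a,b) ∈ t} belongs to 𝒯(Y). -/
/-- Orthogonal of a set of subsets: nonempty-intersection duality. -/
def orth {α : Type*} (T : Set (Set α)) : Set (Set α) :=
  {u' : Set α | ∀ u ∈ T, (u ∩ u').Nonempty}

/-- Direct image of a set under a relation. -/
def relIm {α β : Type*} (t : Set (α × β)) (u : Set α) : Set β :=
  {b | ∃ a ∈ u, (a, b) ∈ t}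

/-- The condition for a relation to be a NUTS morphism: it maps total sets
to total sets under direct image. -/
def isTot {α β : Type*} (TX : Set (Set α)) (TY : Set (Set β)) (t : Set (α × β)) : Prop :=
  ∀ u ∈ TX, relIm t u ∈ TY

/-- Totality of the tensor product: the upward closure of the set of products
of total sets. -/
def tensT {α β : Type*} (TX : Set (Set α)) (TY : Set (Set β)) : Set (Set (α × β)) :=
  {w | ∃ u ∈ TX, ∃ v ∈ TY, u ×ˢ v ⊆ w}

/-- Totality of the linear arrow `X ⊸ Y = (X ⊗ Y⊥)⊥`. -/
def limplT {α β : Type*} (TX : Set (Set α)) (TY : Set (Set β)) : Set (Set (α × β)) :=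
  orth (tensT TX (orth TY))

/-- Characterization of total relations of `X ⊸ Y`:
`t ∈ 𝒯(X ⊸ Y)` iff `t` maps total sets of `X` to total sets of `Y`. -/
theorem limpl_total_iff {α β : Type*} (TX : Set (Set α)) (TY : Set (Set β))
    (hX : TX = orth (orth TX)) (hY : TY = orth (orth TY)) (t : Set (α × β)) :
    t ∈ limplT TX TY ↔ ∀ u ∈ TX, relIm t u ∈ TY := by
  constructor
  · intro ht u hu
    rw [hY]
    intro v' hv'
    obtain ⟨⟨a, b⟩, ⟨ha, hb⟩, hab⟩ := ht (u ×ˢ v') ⟨u, hu, v', hv', subset_rfl⟩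
    exact ⟨b, hb, a, ha, hab⟩
  · intro h w hw
    obtain ⟨u, hu, v', hv', hsub⟩ := hw
    obtain ⟨b, ⟨a, ha, hab⟩, hb1⟩ := hv' (relIm t u) (h u hu)
    exact ⟨(a, b), hsub ⟨ha, hb1⟩, hab⟩
end

section
/- Let X₁, X₂, Y be non-uniform totality spaces and t ⊆ (|X₁| × |X₂|) × |Y|. Then t is a NUTS morphism X₁ ⊗ X₂ → Y if and only if for all u₁ ∈ 𝒯(X₁) and u₂ ∈ 𝒯(X₂), t·(u₁ × u₂) ∈ 𝒯(Y). -/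
/-- A relation `t ⊆ (|X₁| × |X₂|) × |Y|` is a NUTS morphism `X₁ ⊗ X₂ → Y`
iff it maps products of total sets to total sets. -/
theorem tens_morphism_iff {α β γ : Type*}
    (TX₁ : Set (Set α)) (TX₂ : Set (Set β)) (TY : Set (Set γ))
    (hX₁ : TX₁ = orth (orth TX₁)) (hX₂ : TX₂ = orth (orth TX₂))
    (hY : TY = orth (orth TY)) (t : Set ((α × β) × γ)) :
    isTot (tensT TX₁ TX₂) TY t ↔
      ∀ u₁ ∈ TX₁, ∀ u₂ ∈ TX₂, relIm t (u₁ ×ˢ u₂) ∈ TY := by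
  constructor
  · intro h u₁ h₁ u₂ h₂
    exact h _ ⟨u₁, h₁, u₂, h₂, subset_rfl⟩
  · intro h w hw
    obtain ⟨u₁, h₁, u₂, h₂, hsub⟩ := hw
    have key : relIm t (u₁ ×ˢ u₂) ∈ TY := h u₁ h₁ u₂ h₂
    -- TY is upward closed since TY = orth (orth TY)
    have hmono : relIm t (u₁ ×ˢ u₂) ⊆ relIm t w := by
      rintro b ⟨a, ha, hab⟩
      exact ⟨a, hsub ha, hab⟩
    rw [hY] at key ⊢
    intro u' hu'
    obtain ⟨x, hx1, hx2⟩ := key u' hu'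
    exact ⟨x, hx1, hmono hx2⟩
end

section
/- The associativity bijection ((a₁,a₂),b) ↦ (a₁,(a₂,b)) gives an isomorphism in the category NUTS between (X₁ ⊗ X₂) ⊸ Y and X₁ ⊸ (X₂ ⊸ Y), i.e. a relation t is total in (X₁ ⊗ X₂) ⊸ Y iff its curried form is total in X₁ ⊸ (X₂ ⊸ Y). -/
lemma orth_antitone' {α : Type*} {S T : Set (Set α)} (h : S ⊆ T) : orth T ⊆ orth S :=
  fun _ hu' u hu => hu' u (h hu)

lemma subset_orth_orth' {α : Type*} (T : Set (Set α)) : T ⊆ orth (orth T) :=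
  fun u hu w hw => Set.inter_comm u w ▸ hw u hu

lemma orth_orth_orth' {α : Type*} (T : Set (Set α)) : orth (orth (orth T)) = orth T :=
  Set.Subset.antisymm (orth_antitone' (subset_orth_orth' T)) (subset_orth_orth' (orth T))

lemma orth_upward {α : Type*} {T : Set (Set α)} {u u' : Set α} (hu : u ∈ orth T)
    (h : u ⊆ u') : u' ∈ orth T :=
  fun w hw => ((hu w hw).mono (Set.inter_subset_inter_right w h))

lemma relIm_mono {α β : Type*} (t : Set (α × β)) {u u' : Set α} (h : u ⊆ u') :
    relIm t u ⊆ relIm t u' := fun _ ⟨a, ha, hab⟩ => ⟨a, h ha, hab⟩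

lemma mem_limplT {α β : Type*} {TX : Set (Set α)} {TY : Set (Set β)} {t : Set (α × β)} :
    t ∈ limplT TX TY ↔ ∀ u ∈ TX, relIm t u ∈ orth (orth TY) := by
  constructor
  · intro ht u hu v hv
    obtain ⟨⟨a, b⟩, ⟨ha, hb⟩, htab⟩ := ht (u ×ˢ v) ⟨u, hu, v, hv, le_refl _⟩
    exact ⟨b, hb, a, ha, htab⟩
  · rintro h w ⟨u, hu, v, hv, hsub⟩
    obtain ⟨b, hb, a, ha, htab⟩ := h u hu v hv
    exact ⟨(a, b), hsub ⟨ha, hb⟩, htab⟩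

/-- The associativity bijection `((a₁,a₂),b) ↦ (a₁,(a₂,b))` is an isomorphism
in `NUTS` from `(X₁ ⊗ X₂) ⊸ Y` to `X₁ ⊸ (X₂ ⊸ Y)`: a relation `t` is total
in `(X₁ ⊗ X₂) ⊸ Y` iff its curried form is total in `X₁ ⊸ (X₂ ⊸ Y)`. -/
theorem assoc_tens_limpl {α β γ : Type*}
    (TX₁ : Set (Set α)) (TX₂ : Set (Set β)) (TY : Set (Set γ))
    (hX₁ : TX₁ = orth (orth TX₁)) (hX₂ : TX₂ = orth (orth TX₂))
    (hY : TY = orth (orth TY)) (t : Set ((α × β) × γ)) :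
    t ∈ limplT (tensT TX₁ TX₂) TY ↔
      {q : α × (β × γ) | ((q.1, q.2.1), q.2.2) ∈ t} ∈
        limplT TX₁ (limplT TX₂ TY) := by
  set t' : Set (α × (β × γ)) := {q : α × (β × γ) | ((q.1, q.2.1), q.2.2) ∈ t} with ht'
  have key : ∀ (u₁ : Set α) (u₂ : Set β),
      relIm (relIm t' u₁) u₂ = relIm t (u₁ ×ˢ u₂) := by
    intro u₁ u₂
    ext c
    constructor
    · rintro ⟨b, hb, a, ha, hab⟩
      exact ⟨(a, b), ⟨ha, hb⟩, hab⟩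
    · rintro ⟨⟨a, b⟩, ⟨ha, hb⟩, hab⟩
      exact ⟨b, hb, a, ha, hab⟩
  rw [mem_limplT, mem_limplT]
  constructor
  · intro h u₁ hu₁
    have : relIm t' u₁ ∈ limplT TX₂ TY := by
      rw [mem_limplT]
      intro u₂ hu₂
      rw [key]
      exact orth_upward (h (u₁ ×ˢ u₂) ⟨u₁, hu₁, u₂, hu₂, le_refl _⟩) (le_refl _)
    exact subset_orth_orth' _ this
  · rintro h w ⟨u₁, hu₁, u₂, hu₂, hsub⟩
    have h1 : relIm t' u₁ ∈ orth (orth (limplT TX₂ TY)) := h u₁ hu₁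
    rw [limplT, orth_orth_orth', ← limplT, mem_limplT] at h1
    have h2 := h1 u₂ hu₂
    rw [key] at h2
    exact orth_upward h2 (relIm_mono t hsub)
end
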